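/- For any finite set of points in the Euclidean plane, there exists a Euclidean minimum spanning tree in which every vertex has degree at most 5. -/

import Mathlib

noncomputable section
abbrev Pt := EuclideanSpace ℝ (Fin 2)

/-- Length of an edge (pair of vertices drawn from the finite point set `Y`). -/
def elen (Y : Finset Pt) : Sym2 ↥Y → ℝ :=
  Sym2.lift ⟨fun a b => dist (a : Pt) (b : Pt), fun _ _ => dist_comm _ _⟩

/-- Bottleneck (longest edge length) of a graph on the points `Y`. -/
def bneck (Y : Finset Pt) (G : SimpleGraph ↥Y) : ℝ :=
  ⨆ e ∈ G.edgeSet, elen Y e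

/-- Total edge length of a graph on the points `Y`. -/
def totalLen (Y : Finset Pt) (G : SimpleGraph ↥Y) : ℝ :=
  ∑ e ∈ (Set.toFinite G.edgeSet).toFinset, elen Y e

/-! ### Auxiliary lemmas -/

section Aux

open Complex Real Finset

lemma aux_spread_lemma (d : ℝ) (s : Finset ℝ)
    (hs : s.Nonempty) (h : ∀ x ∈ s, ∀ y ∈ s, x ≠ y → d ≤ |x - y|) :
    ((s.card : ℝ) - 1) * d ≤ s.max' hs - s.min' hs := by
  induction s using Finset.induction_on_min with
  | empty => simp at hs
  | insert a t ha ih =>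
    rcases t.eq_empty_or_nonempty with rfl | ht
    · simp
    · have hat : a ∉ t := fun hmem => lt_irrefl a (ha a hmem)
      have ih' := ih ht (fun x hx y hy hxy =>
        h x (mem_insert_of_mem hx) y (mem_insert_of_mem hy) hxy)
      have hmin : (insert a t).min' (insert_nonempty a t) = a := by
        apply le_antisymm (min'_le _ _ (mem_insert_self a t))
        apply le_min'
        intro y hy
        rcases mem_insert.mp hy with rfl | hy
        · exact le_refl _
        · exact (ha y hy).le
      have hmax : (insert a t).max' (insert_nonempty a t) = t.max' ht := by
        apply le_antisymm
        · apply max'_le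
          intro y hy
          rcases mem_insert.mp hy with rfl | hy
          · exact (ha _ (t.max'_mem ht)).le
          · exact le_max' _ _ hy
        · exact le_max' _ _ (mem_insert_of_mem (t.max'_mem ht))
      have hgap : d ≤ t.min' ht - a := by
        have hmem := t.min'_mem ht
        have := h a (mem_insert_self a t) _ (mem_insert_of_mem hmem)
          (ne_of_lt (ha _ hmem))
        rwa [abs_sub_comm, abs_of_pos (sub_pos.mpr (ha _ hmem))] at this
      have hcard : (insert a t).card = t.card + 1 := card_insert_of_notMem hat
      rw [hmin, hmax, hcard]
      push_cast
      have : t.min' ht - t.max' ht ≤ 0 := sub_nonpos.mpr (t.min'_le _ (t.max'_mem ht))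
      nlinarith [ih']

lemma aux_gt_half_cos_of_abs_lt {x : ℝ} (h : |x| < π / 3) : 1 / 2 < Real.cos x := by
  rw [← Real.cos_abs, ← Real.cos_pi_div_three]
  exact Real.cos_lt_cos_of_nonneg_of_le_pi (abs_nonneg x) (by linarith [Real.pi_pos]) h

lemma aux_le_cos_of_abs_le {x : ℝ} (h : |x| ≤ π / 3) : 1 / 2 ≤ Real.cos x := by
  rw [← Real.cos_abs, ← Real.cos_pi_div_three]
  exact Real.cos_le_cos_of_nonneg_of_le_pi (abs_nonneg x) (by linarith [Real.pi_pos]) h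

lemma aux_pi_div_three_le_abs_of_cos_le {x : ℝ} (h : Real.cos x ≤ 1 / 2) : π / 3 ≤ |x| :=
  le_of_not_gt fun hc => absurd h (not_le.mpr (aux_gt_half_cos_of_abs_lt hc))

lemma aux_pi_div_three_lt_abs_of_cos_lt {x : ℝ} (h : Real.cos x < 1 / 2) : π / 3 < |x| :=
  lt_of_not_ge fun hc => absurd h (not_lt.mpr (aux_le_cos_of_abs_le hc))

lemma aux_abs_lt_pi_div_two_of_cos_pos {x : ℝ} (hx : x ∈ Set.Ioc (-π) π)
    (h : 0 < Real.cos x) : |x| < π / 2 := by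
  by_contra hc
  push_neg at hc
  have h1 : Real.cos |x| ≤ 0 := by
    apply Real.cos_nonpos_of_pi_div_two_le_of_le hc
    rcases hx with ⟨h2, h3⟩
    rw [abs_le]
    constructor <;> nlinarith [Real.pi_pos]
  rw [Real.cos_abs] at h1
  linarith

lemma aux_re_mul_conj_eq (z w : ℂ) :
    (z * (starRingEnd ℂ) w).re = ‖z‖ * ‖w‖ * Real.cos (z.arg - w.arg) := by
  rw [Real.cos_sub]
  have h1 := Complex.norm_mul_cos_arg z
  have h2 := Complex.norm_mul_sin_arg z
  have h3 := Complex.norm_mul_cos_arg w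
  have h4 := Complex.norm_mul_sin_arg w
  simp only [Complex.mul_re, Complex.conj_re, Complex.conj_im]
  rw [← h1, ← h2, ← h3, ← h4]
  ring

lemma aux_dist_sq_eq (z w : ℂ) :
    dist z w ^ 2 = ‖z‖ ^ 2 + ‖w‖ ^ 2 - 2 * (z * (starRingEnd ℂ) w).re := by
  rw [Complex.dist_eq, Complex.sq_norm, Complex.sq_norm, Complex.sq_norm]
  simp [Complex.normSq_apply, Complex.mul_re, Complex.sub_re, Complex.sub_im]
  ring

lemma aux_re_le_half_mul {v u u' : ℂ} (hu : u ≠ v) (hu' : u' ≠ v)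
    (h1 : dist v u ≤ dist u u') (h2 : dist v u' ≤ dist u u') :
    ((u - v) * (starRingEnd ℂ) (u' - v)).re
      ≤ ‖u - v‖ * ‖u' - v‖ / 2 := by
  set z := u - v with hz
  set w := u' - v with hw
  have hd : dist u u' = dist z w := by
    rw [Complex.dist_eq, Complex.dist_eq]; congr 1; ring
  have hdz : dist v u = ‖z‖ := by
    rw [Complex.dist_eq, norm_sub_rev]
  have hdw : dist v u' = ‖w‖ := by
    rw [Complex.dist_eq, norm_sub_rev]
  have key := aux_dist_sq_eq z w
  have hza : 0 < ‖z‖ := by rw [← hdz]; exact dist_pos.mpr (Ne.symm hu)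
  have hwa : 0 < ‖w‖ := by rw [← hdw]; exact dist_pos.mpr (Ne.symm hu')
  rw [hd, hdz] at h1
  rw [hd, hdw] at h2
  have hd0 : 0 ≤ dist z w := dist_nonneg
  have h1' : ‖z‖ ^ 2 ≤ dist z w ^ 2 := by nlinarith
  have h2' : ‖w‖ ^ 2 ≤ dist z w ^ 2 := by nlinarith
  nlinarith [sq_nonneg (‖z‖ - ‖w‖)]

lemma aux_cos_le_half_of_mul {m z w : ℂ} (hm : m ≠ 0) (hz : z ≠ 0) (hw : w ≠ 0)
    (h : (z * (starRingEnd ℂ) w).re ≤ ‖z‖ * ‖w‖ / 2) :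
    Real.cos ((m * z).arg - (m * w).arg) ≤ 1 / 2 := by
  have key : ((m * z) * (starRingEnd ℂ) (m * w)).re
      = Complex.normSq m * (z * (starRingEnd ℂ) w).re := by
    have e1 : (m * z) * (starRingEnd ℂ) (m * w)
        = ((Complex.normSq m : ℂ)) * (z * (starRingEnd ℂ) w) := by
      rw [map_mul, ← Complex.mul_conj]
      ring
    rw [e1]; simp [Complex.mul_re]
  rw [aux_re_mul_conj_eq] at key
  have habs : ‖m * z‖ = ‖m‖ * ‖z‖ := norm_mul _ _
  have habs' : ‖m * w‖ = ‖m‖ * ‖w‖ := norm_mul _ _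
  have hmp : 0 < ‖m‖ := norm_pos_iff.mpr hm
  have hzp : 0 < ‖z‖ := norm_pos_iff.mpr hz
  have hwp : 0 < ‖w‖ := norm_pos_iff.mpr hw
  have hns : Complex.normSq m = ‖m‖ ^ 2 := (Complex.sq_norm m).symm
  rw [habs, habs', hns] at key
  have hP : (0:ℝ) < ‖m‖ ^ 2 * ‖z‖ * ‖w‖ := by positivity
  nlinarith [key, h]

/-- Main geometric lemma: among at least six points all of whose mutual distances are at
least their distance to a common center `v`, there are two points `u₀ u'` forming an
equilateral triangle with `v`, with `u₀` on the lower side of a generic linear functional. -/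
lemma aux_geo_main (v : ℂ) (N : Finset ℂ) (hcard : 6 ≤ N.card)
    (hvN : ∀ u ∈ N, u ≠ v)
    (hstar : ∀ u ∈ N, ∀ u' ∈ N, u ≠ u' → dist v u ≤ dist u u')
    (c : ℝ) (hinj : ∀ u ∈ N, u.re + c * u.im ≠ v.re + c * v.im) :
    ∃ u₀ ∈ N, ∃ u' ∈ N, u₀ ≠ u' ∧ u₀.re + c * u₀.im < v.re + c * v.im ∧
      dist u₀ u' = dist v u' := by
  have pi_pos := Real.pi_pos
  have hw0 : ∀ u ∈ N, u - v ≠ 0 := fun u hu => sub_ne_zero.mpr (hvN u hu)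
  have pairRe : ∀ u ∈ N, ∀ u' ∈ N, u ≠ u' →
      ((u - v) * (starRingEnd ℂ) (u' - v)).re
        ≤ ‖u - v‖ * ‖u' - v‖ / 2 := by
    intro u hu u' hu' hne
    refine aux_re_le_half_mul (hvN u hu) (hvN u' hu') (hstar u hu u' hu' hne) ?_
    rw [dist_comm u u']
    exact hstar u' hu' u hu hne.symm
  have fact1 : ∃ u₀ ∈ N, u₀.re + c * u₀.im < v.re + c * v.im := by
    by_contra hcon
    push_neg at hcon
    set m : ℂ := 1 - c * I with hm_def
    have hm : m ≠ 0 := by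
      intro h
      have : m.re = 1 := by simp [hm_def]
      rw [h] at this
      simp at this
    set φ : ℂ → ℝ := fun u => (m * (u - v)).arg with hφ_def
    have hre_pos : ∀ u ∈ N, 0 < (m * (u - v)).re := by
      intro u hu
      have h1 : (m * (u - v)).re = (u.re + c * u.im) - (v.re + c * v.im) := by
        simp [hm_def, Complex.mul_re, Complex.sub_re, Complex.sub_im]
        ring
      rw [h1]
      have hle := hcon u hu
      have hne2 := hinj u hu
      rcases lt_or_eq_of_le hle with h | h
      · linarith
      · exact absurd h.symm hne2
    have hrange : ∀ u ∈ N, |φ u| < π / 2 := by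
      intro u hu
      have hmz : m * (u - v) ≠ 0 := mul_ne_zero hm (hw0 u hu)
      apply aux_abs_lt_pi_div_two_of_cos_pos (Complex.arg_mem_Ioc _)
      rw [Complex.cos_arg hmz]
      exact div_pos (hre_pos u hu) (norm_pos_iff.mpr hmz)
    have hpair : ∀ u ∈ N, ∀ u' ∈ N, u ≠ u' → π / 3 ≤ |φ u - φ u'| := by
      intro u hu u' hu' hne
      exact aux_pi_div_three_le_abs_of_cos_le
        (aux_cos_le_half_of_mul hm (hw0 u hu) (hw0 u' hu') (pairRe u hu u' hu' hne))
    have hinjφ : Set.InjOn φ ↑N := by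
      intro u hu u' hu' he
      by_contra hne
      have := hpair u hu u' hu' hne
      rw [he, sub_self, abs_zero] at this
      linarith
    set Φ := N.image φ with hΦ_def
    have hcardΦ : Φ.card = N.card := Finset.card_image_of_injOn hinjφ
    have hΦne : Φ.Nonempty := by
      rw [← Finset.card_pos, hcardΦ]; omega
    have hpairΦ : ∀ x ∈ Φ, ∀ y ∈ Φ, x ≠ y → π / 3 ≤ |x - y| := by
      intro x hx y hy hxy
      obtain ⟨u, hu, rfl⟩ := Finset.mem_image.mp hx
      obtain ⟨u', hu', rfl⟩ := Finset.mem_image.mp hy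
      exact hpair u hu u' hu' (fun h => hxy (by rw [h]))
    have hspread := aux_spread_lemma (π / 3) Φ hΦne hpairΦ
    have hmax : Φ.max' hΦne < π / 2 := by
      obtain ⟨u, hu, he⟩ := Finset.mem_image.mp (Φ.max'_mem hΦne)
      rw [← he]
      exact lt_of_abs_lt (hrange u hu)
    have hmin : -(π / 2) < Φ.min' hΦne := by
      obtain ⟨u, hu, he⟩ := Finset.mem_image.mp (Φ.min'_mem hΦne)
      rw [← he]
      exact neg_lt_of_abs_lt (hrange u hu)
    have h6 : (6:ℝ) ≤ Φ.card := by
      rw [hcardΦ]; exact_mod_cast hcard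
    nlinarith [hspread, hmax, hmin, h6]
  obtain ⟨u₀, hu₀, hℓu₀⟩ := fact1
  have fact2 : ∃ u' ∈ N, u₀ ≠ u' ∧
      ‖u₀ - v‖ * ‖u' - v‖ / 2
        ≤ ((u₀ - v) * (starRingEnd ℂ) (u' - v)).re := by
    by_contra hcon
    push_neg at hcon
    set d : ℂ := (starRingEnd ℂ) (u₀ - v) with hd_def
    have hd : d ≠ 0 := by
      rw [hd_def]
      exact star_ne_zero.mpr (hw0 u₀ hu₀)
    set ψ : ℂ → ℝ := fun u => (d * (u - v)).arg with hψ_def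
    have habs_d : ‖d‖ = ‖u₀ - v‖ := Complex.norm_conj _
    have hψbig : ∀ u ∈ N, u ≠ u₀ → π / 3 < |ψ u| := by
      intro u hu hne
      have hre : (d * (u - v)).re = ((u₀ - v) * (starRingEnd ℂ) (u - v)).re := by
        have : d * (u - v) = (starRingEnd ℂ) ((u₀ - v) * (starRingEnd ℂ) (u - v)) := by
          rw [map_mul, RingHomInvPair.comp_apply_eq]
        rw [this]
        exact Complex.conj_re _
      have hlt := hcon u hu (Ne.symm hne)
      have hmz : d * (u - v) ≠ 0 := mul_ne_zero hd (hw0 u hu)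
      apply aux_pi_div_three_lt_abs_of_cos_lt
      rw [Complex.cos_arg hmz]
      rw [div_lt_iff₀ (norm_pos_iff.mpr hmz)]
      rw [hre]
      calc ((u₀ - v) * (starRingEnd ℂ) (u - v)).re
          < ‖u₀ - v‖ * ‖u - v‖ / 2 := hlt
        _ = 1 / 2 * ‖d * (u - v)‖ := by
            rw [norm_mul, habs_d]; ring
    set χ : ℂ → ℝ := fun u => if ψ u < 0 then ψ u + 2 * π else ψ u with hχ_def
    have hχrange : ∀ u ∈ N, u ≠ u₀ → π / 3 < χ u ∧ χ u < 5 * π / 3 := by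
      intro u hu hne
      have h1 := hψbig u hu hne
      have h2 := Complex.arg_mem_Ioc (d * (u - v))
      rcases h2 with ⟨h2a, h2b⟩
      simp only [hχ_def]
      split_ifs with hs
      · rw [_root_.abs_of_neg hs] at h1
        constructor <;> linarith
      · push_neg at hs
        rw [_root_.abs_of_nonneg hs] at h1
        constructor <;> linarith
    have hχpair : ∀ u ∈ N, u ≠ u₀ → ∀ u' ∈ N, u' ≠ u₀ → u ≠ u' →
        π / 3 ≤ |χ u - χ u'| := by
      intro u hu hne u' hu' hne' huu'
      have hcos : Real.cos (ψ u - ψ u') ≤ 1 / 2 :=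
        aux_cos_le_half_of_mul hd (hw0 u hu) (hw0 u' hu') (pairRe u hu u' hu' huu')
      have hcos' : Real.cos (χ u - χ u') ≤ 1 / 2 := by
        simp only [hχ_def]
        split_ifs with hs hs' hs'
        · convert hcos using 2; ring
        · have : ψ u + 2 * π - ψ u' = (ψ u - ψ u') + 2 * π := by ring
          rw [this, Real.cos_add_two_pi]; exact hcos
        · have : ψ u - (ψ u' + 2 * π) = (ψ u - ψ u') - 2 * π := by ring
          rw [this, Real.cos_sub_two_pi]; exact hcos
        · exact hcos
      exact aux_pi_div_three_le_abs_of_cos_le hcos'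
    set M := (N.erase u₀).image χ with hM_def
    have hinjχ : Set.InjOn χ ↑(N.erase u₀) := by
      intro u hu u' hu' he
      simp only [Finset.coe_erase, Set.mem_diff, Set.mem_singleton_iff, Finset.mem_coe]
        at hu hu'
      by_contra hne
      have := hχpair u hu.1 hu.2 u' hu'.1 hu'.2 hne
      rw [he, sub_self, abs_zero] at this
      linarith
    have hcardM : M.card = N.card - 1 := by
      rw [hM_def, Finset.card_image_of_injOn hinjχ, Finset.card_erase_of_mem hu₀]
    have hMne : M.Nonempty := by
      rw [← Finset.card_pos, hcardM]; omega
    have hpairM : ∀ x ∈ M, ∀ y ∈ M, x ≠ y → π / 3 ≤ |x - y| := by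
      intro x hx y hy hxy
      obtain ⟨u, hu, rfl⟩ := Finset.mem_image.mp hx
      obtain ⟨u', hu', rfl⟩ := Finset.mem_image.mp hy
      rw [Finset.mem_erase] at hu hu'
      exact hχpair u hu.2 hu.1 u' hu'.2 hu'.1 (fun h => hxy (by rw [h]))
    have hspread := aux_spread_lemma (π / 3) M hMne hpairM
    have hmax : M.max' hMne < 5 * π / 3 := by
      obtain ⟨u, hu, he⟩ := Finset.mem_image.mp (M.max'_mem hMne)
      rw [Finset.mem_erase] at hu
      rw [← he]
      exact (hχrange u hu.2 hu.1).2
    have hmin : π / 3 < M.min' hMne := by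
      obtain ⟨u, hu, he⟩ := Finset.mem_image.mp (M.min'_mem hMne)
      rw [Finset.mem_erase] at hu
      rw [← he]
      exact (hχrange u hu.2 hu.1).1
    have h5 : (5:ℝ) ≤ M.card := by
      have : 5 ≤ M.card := by omega
      exact_mod_cast this
    nlinarith [hspread, hmax, hmin, h5]
  obtain ⟨u', hu', hne, hre⟩ := fact2
  refine ⟨u₀, hu₀, u', hu', hne, hℓu₀, ?_⟩
  set z := u₀ - v with hz
  set w := u' - v with hw
  have hd : dist u₀ u' = dist z w := by
    rw [Complex.dist_eq, Complex.dist_eq]; congr 1; ring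
  have hdz : dist v u₀ = ‖z‖ := by rw [Complex.dist_eq, norm_sub_rev]
  have hdw : dist v u' = ‖w‖ := by rw [Complex.dist_eq, norm_sub_rev]
  have key := aux_dist_sq_eq z w
  have hza : 0 < ‖z‖ := norm_pos_iff.mpr (hw0 u₀ hu₀)
  have hwa : 0 < ‖w‖ := norm_pos_iff.mpr (hw0 u' hu')
  have h1 : ‖z‖ ≤ dist z w := by
    rw [← hdz, ← hd]; exact hstar u₀ hu₀ u' hu' hne
  have h2 : ‖w‖ ≤ dist z w := by
    rw [← hdw, ← hd, dist_comm u₀ u']; exact hstar u' hu' u₀ hu₀ hne.symm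
  have hd0 : 0 ≤ dist z w := dist_nonneg
  have hub : dist z w ^ 2 ≤ ‖z‖ ^ 2 + ‖w‖ ^ 2
      - ‖z‖ * ‖w‖ := by nlinarith [hre, key]
  have hab : ‖z‖ = ‖w‖ := by nlinarith
  have : dist z w = ‖w‖ := by nlinarith
  rw [hd, hdw, this]

end Aux

/-! ### Graph-theoretic lemmas -/

section Graph

open SimpleGraph

variable {V : Type*}

lemma aux_reachable_deleteEdge {G : SimpleGraph V} {v w : V}
    (h : (G.deleteEdges {s(v, w)}).Reachable v w) {x y : V} (p : G.Walk x y) :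
    (G.deleteEdges {s(v, w)}).Reachable x y := by
  induction p with
  | nil => exact Reachable.refl _
  | cons hadj q ih =>
    rename_i a b yy
    refine Reachable.trans ?_ ih
    by_cases he : s(a, b) = s(v, w)
    · rw [Sym2.eq_iff] at he
      rcases he with ⟨rfl, rfl⟩ | ⟨rfl, rfl⟩
      · exact h
      · exact h.symm
    · exact SimpleGraph.Adj.reachable (by
        rw [SimpleGraph.deleteEdges_adj]
        exact ⟨hadj, by simpa using he⟩)

/-- The tree edge-exchange lemma: delete edge `vw` from a tree and add edge `uw`,
where `u` is another neighbor of `v`. -/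
lemma aux_tree_swap {T : SimpleGraph V} (hT : T.IsTree) {v w u : V}
    (hvw : T.Adj v w) (hvu : T.Adj v u) (huw : u ≠ w) :
    ((T.deleteEdges {s(v, w)}) ⊔ SimpleGraph.fromEdgeSet {s(u, w)}).IsTree ∧
    ((T.deleteEdges {s(v, w)}) ⊔ SimpleGraph.fromEdgeSet {s(u, w)}).edgeSet
      = insert s(u, w) (T.edgeSet \ {s(v, w)}) ∧
    s(u, w) ∉ T.edgeSet := by
  have huv : u ≠ v := hvu.ne'
  have hvw' : v ≠ w := hvw.ne
  have hne_e : s(u, w) ≠ s(v, w) := by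
    intro h
    rw [Sym2.eq_iff] at h
    rcases h with ⟨h1, -⟩ | ⟨h1, -⟩
    · exact huv h1
    · exact huw h1
  have hnoadj : ¬T.Adj u w := by
    intro hadj
    have hp2 : (Walk.cons hvu.symm (Walk.cons hvw Walk.nil) : T.Walk u w).IsPath := by
      simp [Walk.isPath_def, huv, huw, hvw', hvu.ne]
    have := hT.IsAcyclic.path_unique ⟨_, hp2⟩ (Path.singleton hadj)
    have hlen := congrArg (fun p : T.Path u w => (p : T.Walk u w).length) this
    simp [Path.singleton] at hlen
  have hnomem : s(u, w) ∉ T.edgeSet := hnoadj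
  have hES : ((T.deleteEdges {s(v, w)}) ⊔ SimpleGraph.fromEdgeSet {s(u, w)}).edgeSet
      = insert s(u, w) (T.edgeSet \ {s(v, w)}) := by
    rw [SimpleGraph.edgeSet_sup]
    have h1 : (T.deleteEdges {s(v, w)}).edgeSet = T.edgeSet \ {s(v, w)} := by
      show (T \ fromEdgeSet {s(v, w)}).edgeSet = _
      rw [SimpleGraph.edgeSet_sdiff, SimpleGraph.edgeSet_fromEdgeSet]
      ext e
      simp only [Set.mem_diff, Set.mem_singleton_iff, Set.mem_setOf_eq]
      constructor
      · rintro ⟨h1, h2⟩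
        exact ⟨h1, fun h3 => h2 ⟨h3, by subst h3; simp [hvw']⟩⟩
      · rintro ⟨h1, h2⟩
        exact ⟨h1, fun h3 => h2 h3.1⟩
    have h2 : (SimpleGraph.fromEdgeSet {s(u, w)} : SimpleGraph V).edgeSet = {s(u, w)} := by
      rw [SimpleGraph.edgeSet_fromEdgeSet]
      ext e
      simp only [Set.mem_diff, Set.mem_singleton_iff, Set.mem_setOf_eq]
      constructor
      · rintro ⟨h1, -⟩
        exact h1
      · rintro rfl
        exact ⟨rfl, by simp [huw]⟩
    rw [h1, h2]
    ext e
    simp only [Set.mem_union, Set.mem_diff, Set.mem_singleton_iff, Set.mem_insert_iff]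
    tauto
  refine ⟨⟨?_, ?_⟩, hES, hnomem⟩
  · have hrw : (T.deleteEdges {s(v, w)}) ⊔ SimpleGraph.fromEdgeSet {s(u, w)}
        = (T ⊔ SimpleGraph.fromEdgeSet {s(u, w)}).deleteEdges {s(v, w)} := by
      ext a b
      simp only [SimpleGraph.sup_adj, SimpleGraph.deleteEdges_adj,
        SimpleGraph.fromEdgeSet_adj, Set.mem_singleton_iff]
      constructor
      · rintro (⟨h1, h2⟩ | ⟨h1, h2⟩)
        · exact ⟨Or.inl h1, h2⟩
        · exact ⟨Or.inr ⟨h1, h2⟩, by rw [h1]; exact hne_e⟩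
      · rintro ⟨h1 | ⟨h1, h2⟩, h3⟩
        · exact Or.inl ⟨h1, h3⟩
        · exact Or.inr ⟨h1, h2⟩
    rw [hrw]
    have hconn'' : (T ⊔ SimpleGraph.fromEdgeSet {s(u, w)}).Connected :=
      hT.isConnected.mono le_sup_left
    have hadj_vu : ((T ⊔ SimpleGraph.fromEdgeSet {s(u, w)}).deleteEdges {s(v, w)}).Adj v u := by
      rw [SimpleGraph.deleteEdges_adj]
      refine ⟨?_, ?_⟩
      · rw [SimpleGraph.sup_adj]
        exact Or.inl hvu
      · simp only [Set.mem_singleton_iff, Sym2.eq_iff]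
        push_neg
        exact ⟨fun _ => huw, fun h => absurd h hvw'⟩
    have hadj_uw : ((T ⊔ SimpleGraph.fromEdgeSet {s(u, w)}).deleteEdges {s(v, w)}).Adj u w := by
      rw [SimpleGraph.deleteEdges_adj]
      refine ⟨?_, by simpa using hne_e⟩
      rw [SimpleGraph.sup_adj, SimpleGraph.fromEdgeSet_adj]
      exact Or.inr ⟨rfl, huw⟩
    have hreach : ((T ⊔ SimpleGraph.fromEdgeSet {s(u, w)}).deleteEdges {s(v, w)}).Reachable v w :=
      hadj_vu.reachable.trans hadj_uw.reachable
    haveI : Nonempty V := hT.isConnected.nonempty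
    exact SimpleGraph.Connected.mk
      (fun x y => aux_reachable_deleteEdge hreach (hconn''.preconnected x y).some)
  · intro x cyc hcyc
    classical
    by_cases hmem : s(u, w) ∈ cyc.edges
    · have hkey := SimpleGraph.adj_and_reachable_delete_edges_iff_exists_cycle.mpr
        ⟨x, cyc, hcyc, hmem⟩
      have hle : (((T.deleteEdges {s(v, w)}) ⊔ SimpleGraph.fromEdgeSet {s(u, w)})
          \ SimpleGraph.fromEdgeSet {s(u, w)}) ≤ T.deleteEdges {s(v, w)} := by
        intro a b hab
        rw [SimpleGraph.sdiff_adj] at hab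
        rcases hab with ⟨h1 | h1, h2⟩
        · exact h1
        · exact absurd h1 h2
      have reach1 : (T.deleteEdges {s(v, w)}).Reachable u w := hkey.2.mono hle
      have reach2 : (T.deleteEdges {s(v, w)}).Reachable v u := by
        refine SimpleGraph.Adj.reachable ?_
        rw [SimpleGraph.deleteEdges_adj]
        refine ⟨hvu, ?_⟩
        simp only [Set.mem_singleton_iff, Sym2.eq_iff]
        push_neg
        exact ⟨fun _ => huw, fun h => absurd h hvw'⟩
      have reach : (T \ SimpleGraph.fromEdgeSet {s(v, w)}).Reachable v w :=
        reach2.trans reach1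
      obtain ⟨y, p, hp, -⟩ := SimpleGraph.adj_and_reachable_delete_edges_iff_exists_cycle.mp
        ⟨hvw, reach⟩
      exact hT.IsAcyclic p hp
    · have hsub : ∀ e ∈ cyc.edges, e ∈ T.edgeSet := by
        intro e he
        have := cyc.edges_subset_edgeSet he
        rw [hES] at this
        rcases this with rfl | ⟨h1, -⟩
        · exact absurd he hmem
        · exact h1
      exact hT.IsAcyclic _ (hcyc.transfer hsub)

lemma aux_exists_tree (V : Type*) [Fintype V] [Nonempty V] : ∃ T : SimpleGraph V, T.IsTree := by
  classical
  set μ : SimpleGraph V → ℕ := fun G => (Set.toFinite G.edgeSet).toFinset.card with hμ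
  have hconn : (⊤ : SimpleGraph V).Connected := SimpleGraph.connected_top
  set 𝒞 : Finset (SimpleGraph V) := Finset.univ.filter (fun G => G.Connected) with h𝒞
  have h𝒞ne : 𝒞.Nonempty := ⟨⊤, Finset.mem_filter.mpr ⟨Finset.mem_univ _, hconn⟩⟩
  obtain ⟨G, hGmem, hGmin⟩ := Finset.exists_min_image 𝒞 μ h𝒞ne
  have hGconn : G.Connected := (Finset.mem_filter.mp hGmem).2
  refine ⟨G, hGconn, ?_⟩
  intro x c hc
  obtain ⟨y, hadj, c', rfl⟩ : ∃ (y : V) (h : G.Adj x y) (c' : G.Walk y x), c = Walk.cons h c' := by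
    cases c with
    | nil => exact absurd hc (by simp [Walk.isCycle_def])
    | cons h p => exact ⟨_, h, p, rfl⟩
  have hmem : s(x, y) ∈ (Walk.cons hadj c').edges := by simp
  have hkey := SimpleGraph.adj_and_reachable_delete_edges_iff_exists_cycle.mpr
    ⟨x, _, hc, hmem⟩
  have hconn' : (G.deleteEdges {s(x, y)}).Connected := by
    haveI : Nonempty V := hGconn.nonempty
    exact SimpleGraph.Connected.mk
      (fun a b => aux_reachable_deleteEdge hkey.2 (hGconn.preconnected a b).some)
  have hlt : μ (G.deleteEdges {s(x, y)}) < μ G := by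
    apply Finset.card_lt_card
    rw [Finset.ssubset_iff_of_subset]
    · refine ⟨s(x, y), ?_, ?_⟩
      · rw [Set.Finite.mem_toFinset]
        exact hadj
      · rw [Set.Finite.mem_toFinset]
        show ¬ (G \ SimpleGraph.fromEdgeSet {s(x, y)}).Adj x y
        rw [SimpleGraph.sdiff_adj]
        rintro ⟨-, hnot⟩
        exact hnot (by rw [SimpleGraph.fromEdgeSet_adj]; exact ⟨rfl, hadj.ne⟩)
    · intro e he
      rw [Set.Finite.mem_toFinset] at he ⊢
      exact SimpleGraph.edgeSet_subset_edgeSet.mpr (SimpleGraph.deleteEdges_le _) he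
  have := hGmin (G.deleteEdges {s(x, y)})
    (Finset.mem_filter.mpr ⟨Finset.mem_univ _, hconn'⟩)
  omega

end Graph

/-! ### Translation between the plane and `ℂ`, and a sum-manipulation lemma -/

def iotaC (p : Pt) : ℂ := ⟨p 0, p 1⟩

lemma dist_iotaC (p q : Pt) : dist (iotaC p) (iotaC q) = dist p q := by
  rw [EuclideanSpace.dist_eq, Complex.dist_eq, Complex.norm_def, Complex.normSq_apply]
  congr 1
  simp [iotaC, Fin.sum_univ_two, Real.dist_eq, sq_abs, Complex.sub_re, Complex.sub_im]
  ring

lemma iotaC_inj {p q : Pt} (h : iotaC p = iotaC q) : p = q := by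
  ext i
  have h1 := congrArg Complex.re h
  have h2 := congrArg Complex.im h
  simp [iotaC] at h1 h2
  fin_cases i <;> assumption

lemma aux_sum_swap_edges {α : Type*} [DecidableEq α] {A B : Set α} (hA : A.Finite)
    (hB : B.Finite) {e₁ e₂ : α} (h : B = insert e₂ (A \ {e₁})) (he₁ : e₁ ∈ A)
    (he₂ : e₂ ∉ A) (g : α → ℝ) :
    ∑ e ∈ hB.toFinset, g e = ∑ e ∈ hA.toFinset, g e - g e₁ + g e₂ := by
  have hBF : hB.toFinset = insert e₂ (hA.toFinset.erase e₁) := by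
    ext e
    simp [Set.Finite.mem_toFinset, h, Finset.mem_erase, and_comm]
  rw [hBF, Finset.sum_insert (by simp [Set.Finite.mem_toFinset, he₂]),
    Finset.sum_erase_eq_sub (by simp [Set.Finite.mem_toFinset, he₁])]
  ring

/-! ### The main theorem -/

/-- every finite planar point set has a Euclidean MST of maximum degree at most 5. -/
theorem exists_euclidean_mst_maxDegree_le_five (X : Finset Pt) (hX : X.Nonempty) :
    ∃ T : SimpleGraph ↥X, T.IsTree ∧
      (∀ G : SimpleGraph ↥X, G.IsTree → totalLen X T ≤ totalLen X G) ∧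
      ∀ v : ↥X, (T.neighborSet v).ncard ≤ 5 := by
  classical
  haveI : Nonempty ↥X := by obtain ⟨x, hx⟩ := hX; exact ⟨⟨x, hx⟩⟩
  -- a generic linear functional p ↦ p 0 + c * p 1, injective on X
  obtain ⟨c, hc⟩ : ∃ c : ℝ, c ∉ ((X ×ˢ X).image
      (fun pq => (pq.1 0 - pq.2 0) / (pq.2 1 - pq.1 1))) :=
    Infinite.exists_notMem_finset _
  have hgen : ∀ p ∈ X, ∀ q ∈ X, p ≠ q → p 0 + c * p 1 ≠ q 0 + c * q 1 := by
    intro p hp q hq hne heq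
    by_cases h1 : p 1 = q 1
    · have h0 : p 0 = q 0 := by rw [h1] at heq; linarith
      apply hne
      ext i
      fin_cases i <;> assumption
    · apply hc
      rw [Finset.mem_image]
      refine ⟨(p, q), Finset.mem_product.mpr ⟨hp, hq⟩, ?_⟩
      have hden : q 1 - p 1 ≠ 0 := sub_ne_zero.mpr (Ne.symm h1)
      field_simp
      linarith [heq]
  -- the potential: sum of f-values over edges
  set f : ↥X → ℝ := fun x => (x : Pt) 0 + c * (x : Pt) 1 with hf
  set wt : Sym2 ↥X → ℝ := Sym2.lift ⟨fun a b => f a + f b, fun a b => add_comm _ _⟩ with hwt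
  set pot : SimpleGraph ↥X → ℝ :=
    fun G => ∑ e ∈ (Set.toFinite G.edgeSet).toFinset, wt e with hpot
  -- choose T : first minimize total length among trees, then the potential
  obtain ⟨T₀, hT₀⟩ := aux_exists_tree ↥X
  set 𝒯 : Finset (SimpleGraph ↥X) := Finset.univ.filter (fun G => G.IsTree) with h𝒯
  have hT₀mem : T₀ ∈ 𝒯 := Finset.mem_filter.mpr ⟨Finset.mem_univ _, hT₀⟩
  obtain ⟨T₁, hT₁mem, hT₁min⟩ := Finset.exists_min_image 𝒯 (totalLen X) ⟨T₀, hT₀mem⟩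
  set 𝒯m : Finset (SimpleGraph ↥X) :=
    𝒯.filter (fun G => totalLen X G ≤ totalLen X T₁) with h𝒯m
  obtain ⟨T, hTmem, hTpot⟩ := Finset.exists_min_image 𝒯m pot
    ⟨T₁, Finset.mem_filter.mpr ⟨hT₁mem, le_refl _⟩⟩
  obtain ⟨hTmem𝒯, hTle⟩ := Finset.mem_filter.mp hTmem
  have hTtree : T.IsTree := (Finset.mem_filter.mp hTmem𝒯).2
  have hMST : ∀ G : SimpleGraph ↥X, G.IsTree → totalLen X T ≤ totalLen X G := by
    intro G hG
    exact hTle.trans (hT₁min G (Finset.mem_filter.mpr ⟨Finset.mem_univ _, hG⟩))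
  refine ⟨T, hTtree, hMST, ?_⟩
  intro v
  by_contra hdeg
  push_neg at hdeg
  -- neighbors of v
  have hnfin : (T.neighborSet v).Finite := Set.toFinite _
  set Fv : Finset ↥X := hnfin.toFinset with hFv
  have hFvmem : ∀ u, u ∈ Fv ↔ T.Adj v u := by
    intro u
    rw [hFv, Set.Finite.mem_toFinset, SimpleGraph.mem_neighborSet]
  have hFvcard : 6 ≤ Fv.card := by
    rw [hFv, ← Set.ncard_eq_toFinset_card _ hnfin]
    exact hdeg
  have helen : ∀ a b : ↥X, elen X s(a, b) = dist (a : Pt) (b : Pt) := fun a b => rfl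
  have hwt_mk : ∀ a b : ↥X, wt s(a, b) = f a + f b := fun a b => rfl
  have htot : ∀ G : SimpleGraph ↥X,
      totalLen X G = ∑ e ∈ (Set.toFinite G.edgeSet).toFinset, elen X e := fun _ => rfl
  -- ★: every pair of neighbors is at distance at least their distance to v
  have hstarPt : ∀ u ∈ Fv, ∀ u' ∈ Fv, u ≠ u' →
      dist (v : Pt) (u : Pt) ≤ dist (u : Pt) (u' : Pt) := by
    intro u hu u' hu' hne
    by_contra hlt
    push_neg at hlt
    have hadj_vu : T.Adj v u := (hFvmem u).mp hu
    have hadj_vu' : T.Adj v u' := (hFvmem u').mp hu'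
    obtain ⟨hT₂tree, hT₂ES, hT₂nm⟩ := aux_tree_swap hTtree hadj_vu hadj_vu' hne.symm
    have he₁ : s(v, u) ∈ T.edgeSet := hadj_vu
    have hsum := aux_sum_swap_edges (Set.toFinite T.edgeSet)
      (Set.toFinite ((T.deleteEdges {s(v, u)}) ⊔
        SimpleGraph.fromEdgeSet {s(u', u)}).edgeSet) hT₂ES he₁ hT₂nm (elen X)
    have hcmp := hMST _ hT₂tree
    rw [htot T, htot ((T.deleteEdges {s(v, u)}) ⊔ SimpleGraph.fromEdgeSet {s(u', u)})] at hcmp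
    rw [hsum, helen v u, helen u' u, dist_comm (u' : Pt) (u : Pt)] at hcmp
    linarith
  -- transfer to ℂ and apply the geometric lemma
  set N : Finset ℂ := Fv.image (fun x : ↥X => iotaC x.1) with hN
  have hinjN : Set.InjOn (fun x : ↥X => iotaC x.1) ↑Fv := by
    intro a _ b _ hab
    exact Subtype.ext (iotaC_inj hab)
  have hcardN : 6 ≤ N.card := by
    rw [hN, Finset.card_image_of_injOn hinjN]
    exact hFvcard
  have hsubne : ∀ u : ↥X, T.Adj v u → (u : Pt) ≠ (v : Pt) := by
    intro u hadj h
    exact hadj.ne' (Subtype.ext h)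
  have hvN : ∀ z ∈ N, z ≠ iotaC (v : Pt) := by
    intro z hz
    obtain ⟨u, hu, rfl⟩ := Finset.mem_image.mp hz
    intro h
    exact hsubne u ((hFvmem u).mp hu) (iotaC_inj h)
  have hstarC : ∀ z ∈ N, ∀ z' ∈ N, z ≠ z' → dist (iotaC (v : Pt)) z ≤ dist z z' := by
    intro z hz z' hz' hne
    obtain ⟨u, hu, rfl⟩ := Finset.mem_image.mp hz
    obtain ⟨u', hu', rfl⟩ := Finset.mem_image.mp hz'
    rw [dist_iotaC, dist_iotaC]
    exact hstarPt u hu u' hu' (fun h => hne (by rw [h]))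
  have hinjC : ∀ z ∈ N, z.re + c * z.im ≠ (iotaC (v : Pt)).re + c * (iotaC (v : Pt)).im := by
    intro z hz
    obtain ⟨u, hu, rfl⟩ := Finset.mem_image.mp hz
    have hne : (u : Pt) ≠ (v : Pt) := hsubne u ((hFvmem u).mp hu)
    exact hgen (u : Pt) u.2 (v : Pt) v.2 hne
  obtain ⟨z₀, hz₀, z', hz', hzne, hzlt, hzeq⟩ :=
    aux_geo_main (iotaC (v : Pt)) N hcardN hvN hstarC c hinjC
  obtain ⟨u₀, hu₀, rfl⟩ := Finset.mem_image.mp hz₀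
  obtain ⟨u', hu', rfl⟩ := Finset.mem_image.mp hz'
  have hne : u₀ ≠ u' := fun h => hzne (by rw [h])
  have hadj_vu₀ : T.Adj v u₀ := (hFvmem u₀).mp hu₀
  have hadj_vu' : T.Adj v u' := (hFvmem u').mp hu'
  have hfu₀ : f u₀ < f v := hzlt
  have hdeq : dist (u₀ : Pt) (u' : Pt) = dist (v : Pt) (u' : Pt) := by
    rw [← dist_iotaC, ← dist_iotaC]
    exact hzeq
  -- perform the swap: remove edge v-u', add edge u₀-u'
  obtain ⟨hT₃tree, hT₃ES, hT₃nm⟩ := aux_tree_swap hTtree hadj_vu' hadj_vu₀ hne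
  set T₃ : SimpleGraph ↥X :=
    (T.deleteEdges {s(v, u')}) ⊔ SimpleGraph.fromEdgeSet {s(u₀, u')} with hT₃
  have he₁ : s(v, u') ∈ T.edgeSet := hadj_vu'
  have hsumL := aux_sum_swap_edges (Set.toFinite T.edgeSet)
    (Set.toFinite T₃.edgeSet) hT₃ES he₁ hT₃nm (elen X)
  have hsumP := aux_sum_swap_edges (Set.toFinite T.edgeSet)
    (Set.toFinite T₃.edgeSet) hT₃ES he₁ hT₃nm wt
  have htotT₃ : totalLen X T₃ = totalLen X T := by
    rw [htot T₃, htot T, hsumL, helen v u', helen u₀ u', hdeq]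
    ring
  have hpotT₃ : pot T₃ = pot T - f v + f u₀ := by
    show (∑ e ∈ (Set.toFinite T₃.edgeSet).toFinset, wt e)
        = (∑ e ∈ (Set.toFinite T.edgeSet).toFinset, wt e) - f v + f u₀
    rw [hsumP, hwt_mk v u', hwt_mk u₀ u']
    ring
  have hT₃mem : T₃ ∈ 𝒯m := by
    refine Finset.mem_filter.mpr ⟨Finset.mem_filter.mpr ⟨Finset.mem_univ _, hT₃tree⟩, ?_⟩
    rw [htotT₃]
    exact hTle
  have := hTpot T₃ hT₃mem
  rw [hpotT₃] at this
  linarith
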